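/- Let k be a perfect field of characteristic p > 0, S = k[x_1,…,x_n], e ≥ 1, q = p^e, let z ∈ S with totalDegree(z) ≤ D, and let a ⊆ S be an ideal generated by polynomials of total degree at most d. Define ideals recursively by J_0 = a and J_{t+1} = the ideal generated by {Φ_S(F^e_* x) : x ∈ z·J_t}. Then for every t ≥ 1, the ideal J_t is generated by polynomials of total degree at most ⌊((1 + q + q^2 + ⋯ + q^{t−1})·D + d)/q^t⌋. -/

import Mathlib

open MvPolynomial

/-- Iterated degree bound: if `J₀ = a` is generated in degrees `≤ d`,
`deg z ≤ D`, and `J_{t+1} = ⟨Φ_S(F^e_* z·J_t)⟩`, then `J_t` is generated by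
polynomials of degree at most `⌊((1 + q + ⋯ + q^{t−1})D + d)/q^t⌋`. -/
theorem stmt_18 {k : Type*} [Field k] (p : ℕ) (hp : p.Prime) [CharP k p]
    [PerfectField k]
    (n e : ℕ) (he : 1 ≤ e)
    (Φ : MvPolynomial (Fin n) k → MvPolynomial (Fin n) k)
    (hΦadd : ∀ f g, Φ (f + g) = Φ f + Φ g)
    (hΦlin : ∀ s f, Φ (s ^ p ^ e * f) = s * Φ f)
    (hΦbasis : ∀ α : Fin n → Fin (p ^ e),
      Φ (∏ i : Fin n, X i ^ (α i : ℕ)) =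
        if ∀ i, (α i : ℕ) = p ^ e - 1 then 1 else 0)
    (z : MvPolynomial (Fin n) k) (D d : ℕ) (hzD : z.totalDegree ≤ D)
    (G : Set (MvPolynomial (Fin n) k)) (hGd : ∀ g ∈ G, g.totalDegree ≤ d)
    (a : Ideal (MvPolynomial (Fin n) k)) (ha : a = Ideal.span G)
    (J : ℕ → Ideal (MvPolynomial (Fin n) k))
    (hJ0 : J 0 = a)
    (hJs : ∀ t : ℕ, J (t + 1) =
      Ideal.span (Φ '' ((fun f => z * f) '' (J t : Set (MvPolynomial (Fin n) k))))) :
    ∀ t : ℕ, 1 ≤ t →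
      ∃ G' : Set (MvPolynomial (Fin n) k),
        Ideal.span G' = J t ∧
        ∀ g ∈ G', g.totalDegree ≤
          ((∑ i ∈ Finset.range t, (p ^ e) ^ i) * D + d) / (p ^ e) ^ t := by
  classical
  set q := p ^ e with hqdef
  have hq : 0 < q := pow_pos hp.pos e
  haveI : ExpChar k p := ExpChar.prime hp
  -- q-th roots in k
  obtain ⟨root, hroot⟩ : ∃ r : k → k, ∀ c, (r c) ^ q = c := by
    refine ⟨fun c => (iterateFrobeniusEquiv k p e).symm c, fun c => ?_⟩
    have h := (iterateFrobeniusEquiv k p e).apply_symm_apply c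
    rwa [iterateFrobeniusEquiv_def] at h
  -- Φ 0 = 0
  have hΦ0 : Φ 0 = 0 := by
    have h := hΦadd 0 0
    rw [add_zero] at h
    exact (left_eq_add.mp h)
  -- Φ of finite sums
  have hΦsum : ∀ {ι : Type} (s : Finset ι) (f : ι → MvPolynomial (Fin n) k),
      Φ (∑ i ∈ s, f i) = ∑ i ∈ s, Φ (f i) := by
    intro ι s f
    induction s using Finset.induction with
    | empty => simpa using hΦ0
    | insert _ _ hi ih =>
      rw [Finset.sum_insert hi, hΦadd, ih, Finset.sum_insert hi]
  -- splitting a monomial into a q-th power times a reduced monomial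
  have hsplit : ∀ (u : Fin n → ℕ) (c : k),
      C c * ∏ i, X (R := k) i ^ u i =
        (C (root c) * ∏ i, X i ^ (u i / q)) ^ q * ∏ i, X i ^ (u i % q) := by
    intro u c
    have hX : ∀ i : Fin n, X (R := k) i ^ u i =
        (X i ^ (u i / q)) ^ q * X i ^ (u i % q) := by
      intro i
      conv_lhs => rw [← Nat.div_add_mod (u i) q]
      rw [pow_add, ← pow_mul, mul_comm q (u i / q)]
    calc C c * ∏ i, X (R := k) i ^ u i
        = C c * ∏ i, ((X i ^ (u i / q)) ^ q * X i ^ (u i % q)) := by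
          congr 1; exact Finset.prod_congr rfl fun i _ => hX i
      _ = C ((root c) ^ q) * ((∏ i, X i ^ (u i / q)) ^ q * ∏ i, X i ^ (u i % q)) := by
          rw [hroot, Finset.prod_mul_distrib, Finset.prod_pow]
      _ = (C (root c) * ∏ i, X i ^ (u i / q)) ^ q * ∏ i, X i ^ (u i % q) := by
          rw [mul_pow, ← C_pow]; ring
  -- main Cartier-type computation
  have hmono : ∀ (u : Fin n → ℕ) (c : k) (w : MvPolynomial (Fin n) k),
      Φ (C c * (∏ i, X i ^ u i) * w) =
        (C (root c) * ∏ i, X i ^ (u i / q)) * Φ ((∏ i, X i ^ (u i % q)) * w) := by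
    intro u c w
    rw [hsplit u c, mul_assoc, hΦlin]
  -- monomial i.e. `monomial u c` as `C c * ∏ X^u`
  have hm : ∀ (u : Fin n →₀ ℕ) (c : k),
      (monomial u c : MvPolynomial (Fin n) k) = C c * ∏ i, X i ^ u i := by
    intro u c
    rw [monomial_eq]
    congr 1
    exact Finsupp.prod_fintype _ _ fun i => pow_zero _
  -- key membership lemma
  have hkey : ∀ (K : Ideal (MvPolynomial (Fin n) k)) (w : MvPolynomial (Fin n) k),
      (∀ α : Fin n → Fin q, Φ ((∏ i, X i ^ (α i : ℕ)) * w) ∈ K) →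
      ∀ a : MvPolynomial (Fin n) k, Φ (a * w) ∈ K := by
    intro K w hK a
    induction a using MvPolynomial.induction_on' with
    | monomial u c =>
      rw [hm u c, hmono]
      exact K.mul_mem_left _ (hK fun i => ⟨u i % q, Nat.mod_lt _ hq⟩)
    | add f g hf hg =>
      rw [add_mul, hΦadd]
      exact K.add_mem hf hg
  -- degree lemma
  have hdeg : ∀ (α : Fin n → Fin q) (w : MvPolynomial (Fin n) k),
      (Φ ((∏ i, X i ^ (α i : ℕ)) * w)).totalDegree ≤ w.totalDegree / q := by
    intro α w
    have hw : (∏ i, X (R := k) i ^ (α i : ℕ)) * w =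
        ∑ δ ∈ w.support, ((∏ i, X i ^ (α i : ℕ)) * monomial δ (coeff δ w)) := by
      rw [← Finset.mul_sum, support_sum_monomial_coeff]
    rw [hw, hΦsum]
    refine (totalDegree_finset_sum _ _).trans (Finset.sup_le fun δ hδ => ?_)
    have hprod : (∏ i, X (R := k) i ^ (α i : ℕ)) * monomial δ (coeff δ w) =
        C (coeff δ w) * ∏ i, X i ^ ((α i : ℕ) + δ i) := by
      rw [hm δ, ← mul_assoc, mul_comm _ (C (coeff δ w)), mul_assoc,
        ← Finset.prod_mul_distrib]
      congr 1
      exact Finset.prod_congr rfl fun i _ => (pow_add _ _ _).symm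
    have h1 : Φ ((∏ i, X (R := k) i ^ (α i : ℕ)) * monomial δ (coeff δ w)) =
        (C (root (coeff δ w)) * ∏ i, X i ^ (((α i : ℕ) + δ i) / q)) *
          Φ ((∏ i, X i ^ (((α i : ℕ) + δ i) % q)) * 1) := by
      rw [hprod, ← mul_one (C (coeff δ w) * ∏ i, X i ^ ((α i : ℕ) + δ i)), hmono]
    rw [mul_one] at h1
    have hb : Φ (∏ i, X (R := k) i ^ (((α i : ℕ) + δ i) % q)) =
        if ∀ i, ((α i : ℕ) + δ i) % q = q - 1 then 1 else 0 :=
      hΦbasis fun i => ⟨((α i : ℕ) + δ i) % q, Nat.mod_lt _ hq⟩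
    rw [h1, hb]
    split_ifs with hcond
    · rw [mul_one]
      refine (totalDegree_mul _ _).trans ?_
      rw [totalDegree_C, zero_add]
      refine (totalDegree_finset_prod _ _).trans ?_
      have h2 : ∀ i : Fin n,
          (X (R := k) i ^ (((α i : ℕ) + δ i) / q)).totalDegree =
            ((α i : ℕ) + δ i) / q := fun i => totalDegree_X_pow _ _
      rw [Finset.sum_congr rfl fun i _ => h2 i]
      rw [Nat.le_div_iff_mul_le hq]
      have h3 : ∀ i : Fin n, (((α i : ℕ) + δ i) / q) * q ≤ δ i := by
        intro i
        have hmod := hcond i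
        have hdm := Nat.div_add_mod ((α i : ℕ) + δ i) q
        rw [hmod] at hdm
        have hα : (α i : ℕ) ≤ q - 1 := Nat.le_sub_one_of_lt (α i).isLt
        have : q * (((α i : ℕ) + δ i) / q) ≤ δ i := by omega
        rwa [mul_comm]
      calc (∑ i, ((α i : ℕ) + δ i) / q) * q = ∑ i, (((α i : ℕ) + δ i) / q) * q :=
            Finset.sum_mul ..
        _ ≤ ∑ i, δ i := Finset.sum_le_sum fun i _ => h3 i
        _ = δ.sum fun _ v => v := (Finsupp.sum_fintype δ (fun _ v => v) fun i => rfl).symm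
        _ ≤ w.totalDegree := le_totalDegree hδ
    · rw [mul_zero, totalDegree_zero]
      exact Nat.zero_le _
  -- one-step generation lemma
  have hstep : ∀ (t : ℕ) (G' : Set (MvPolynomial (Fin n) k)) (m : ℕ), Ideal.span G' = J t →
      (∀ g ∈ G', g.totalDegree ≤ m) →
      ∃ G'' : Set (MvPolynomial (Fin n) k), Ideal.span G'' = J (t + 1) ∧
        ∀ g ∈ G'', g.totalDegree ≤ (D + m) / q := by
    intro t G' m hspan hdegG
    set T : Set (MvPolynomial (Fin n) k) :=
      {h | ∃ α : Fin n → Fin q, ∃ g ∈ G', h = Φ ((∏ i, X i ^ (α i : ℕ)) * (z * g))}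
      with hT
    refine ⟨T, le_antisymm ?_ ?_, ?_⟩
    · rw [hJs t, Ideal.span_le]
      rintro y ⟨α, g, hg, rfl⟩
      refine Ideal.subset_span ⟨z * ((∏ i, X i ^ (α i : ℕ)) * g),
        ⟨(∏ i, X i ^ (α i : ℕ)) * g, ?_, rfl⟩, ?_⟩
      · rw [← hspan]
        exact Ideal.mul_mem_left _ _ (Ideal.subset_span hg)
      · congr 1; ring
    · rw [hJs t, Ideal.span_le]
      rintro y ⟨x, ⟨f, hf, rfl⟩, rfl⟩
      rw [← hspan] at hf
      have main : ∀ (f : MvPolynomial (Fin n) k) (_ : f ∈ Ideal.span G'), ∀ b : MvPolynomial (Fin n) k,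
          Φ (b * (z * f)) ∈ Ideal.span T := by
        intro f hf
        induction hf using Submodule.span_induction with
        | mem g hg =>
          intro b
          exact hkey (Ideal.span T) (z * g)
            (fun α => Ideal.subset_span ⟨α, g, hg, rfl⟩) b
        | zero => intro b; simp [hΦ0]
        | add x y hx hy ihx ihy =>
          intro b
          have hxy : b * (z * (x + y)) = b * (z * x) + b * (z * y) := by ring
          rw [hxy, hΦadd]
          exact Ideal.add_mem _ (ihx b) (ihy b)
        | smul c x hx ih =>
          intro b
          have hcx : b * (z * (c • x)) = (b * c) * (z * x) := by
            rw [smul_eq_mul]; ring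
          rw [hcx]
          exact ih (b * c)
      have hmem := main f hf 1
      rw [one_mul] at hmem
      simpa using hmem
    · rintro y ⟨α, g, hg, rfl⟩
      refine (hdeg α (z * g)).trans (Nat.div_le_div_right ?_)
      exact (totalDegree_mul _ _).trans (add_le_add hzD (hdegG g hg))
  -- the recursive degree bound
  set c : ℕ → ℕ := fun t => Nat.rec d (fun _ m => (D + m) / q) t with hc
  have hGen : ∀ t : ℕ, ∃ G' : Set (MvPolynomial (Fin n) k), Ideal.span G' = J t ∧
      ∀ g ∈ G', g.totalDegree ≤ c t := by
    intro t
    induction t with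
    | zero => exact ⟨G, by rw [hJ0, ha], hGd⟩
    | succ t ih =>
      obtain ⟨G', h1, h2⟩ := ih
      exact hstep t G' (c t) h1 h2
  have hcval : ∀ t : ℕ, 1 ≤ t →
      c t = ((∑ i ∈ Finset.range t, q ^ i) * D + d) / q ^ t := by
    intro t ht
    induction t with
    | zero => omega
    | succ t ih =>
      by_cases h0 : t = 0
      · subst h0
        show (D + d) / q = _
        rw [Finset.sum_range_one, pow_zero, one_mul, pow_one, add_comm D d]
      · have ht1 : 1 ≤ t := Nat.one_le_iff_ne_zero.mpr h0
        show (D + c t) / q = _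
        rw [ih ht1]
        have hqt : 0 < q ^ t := pow_pos hq t
        have e1 : D + ((∑ i ∈ Finset.range t, q ^ i) * D + d) / q ^ t =
            (((∑ i ∈ Finset.range t, q ^ i) * D + d) + D * q ^ t) / q ^ t := by
          rw [Nat.add_mul_div_right _ _ hqt]
          omega
        rw [e1, Nat.div_div_eq_div_mul, ← pow_succ]
        congr 1
        rw [Finset.sum_range_succ]
        ring
  intro t ht
  obtain ⟨G', h1, h2⟩ := hGen t
  refine ⟨G', h1, fun g hg => ?_⟩
  rw [← hcval t ht]
  exact h2 g hg
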